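/- Let Rad be a root system in a finite-dimensional real inner product space V and let t be an involution of Rad. Then there exist a special involution ε of Rad, pairwise strongly orthogonal roots β₁, …, β_r with ε(β_i) = β_i and t(β_i) = −β_i for all i, and a regular vector v ∈ V, such that t = ε ∘ s_{β₁} ∘ ⋯ ∘ s_{β_r} and v is simultaneously an S-chamber vector for t and an S-chamber vector for ε. -/

import Mathlib

open scoped RealInnerProductSpace

namespace PaperRS

variable {V : Type*} [NormedAddCommGroup V] [InnerProductSpace ℝ V]

/-- The reflection in a root `α`. -/
noncomputable def reflRoot (α x : V) : V := x - (2 * ⟪x, α⟫ / ⟪α, α⟫) • α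

/-- `Rad` is a (reduced, crystallographic) root system in `V`. -/
structure IsRootSystem (Rad : Set V) : Prop where
  finite : Rad.Finite
  nonzero : ∀ α ∈ Rad, α ≠ 0
  spanning : Submodule.span ℝ Rad = ⊤
  integral : ∀ α ∈ Rad, ∀ β ∈ Rad, ∃ n : ℤ, 2 * ⟪β, α⟫ / ⟪α, α⟫ = (n : ℝ)
  reflMem : ∀ α ∈ Rad, ∀ β ∈ Rad, reflRoot α β ∈ Rad
  reduced : ∀ α ∈ Rad, ∀ c : ℝ, c • α ∈ Rad → c = 1 ∨ c = -1

/-- Irreducibility: `Rad` is not the union of two nonempty mutually orthogonal subsets. -/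
def IsIrreducible (Rad : Set V) : Prop :=
  ¬ ∃ R₁ R₂ : Set V, R₁.Nonempty ∧ R₂.Nonempty ∧ Rad = R₁ ∪ R₂ ∧
      ∀ α ∈ R₁, ∀ β ∈ R₂, ⟪α, β⟫ = 0

/-- An involution of the root system `Rad`: an orthogonal linear automorphism `t` of `V`
with `t(Rad) = Rad` and `t ∘ t = id`. -/
structure IsInvolution (Rad : Set V) (t : V ≃ₗᵢ[ℝ] V) : Prop where
  maps : (⇑t) '' Rad = Rad
  invol : ∀ x : V, t (t x) = x

/-- Two roots are strongly orthogonal if neither their sum nor their difference is a root. -/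
def StronglyOrthogonal (Rad : Set V) (α β : V) : Prop :=
  α ≠ β ∧ α ≠ -β ∧ α + β ∉ Rad ∧ α - β ∉ Rad

/-- A vector is regular for `Rad` if it is orthogonal to no root. -/
def IsRegular (Rad : Set V) (v : V) : Prop := ∀ α ∈ Rad, ⟪α, v⟫ ≠ 0

/-- The positive roots determined by a regular vector `v`. -/
def posRoots (Rad : Set V) (v : V) : Set V := {α ∈ Rad | 0 < ⟪α, v⟫}

/-- The base of simple roots determined by a regular vector `v`: the positive roots which
are not sums of two positive roots. -/
def simpleBase (Rad : Set V) (v : V) : Set V :=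
  {α ∈ posRoots Rad v | ¬ ∃ β ∈ posRoots Rad v, ∃ γ ∈ posRoots Rad v, α = β + γ}

/-- A regular vector `v` is an S-chamber vector for an involution `t` if
`(α,v)·(t α,v) > 0` for every complex root `α` (i.e. every root with `t α ≠ ±α`). -/
def IsSChamber (Rad : Set V) (t : V ≃ₗᵢ[ℝ] V) (v : V) : Prop :=
  IsRegular Rad v ∧
    ∀ α ∈ Rad, t α ≠ α → t α ≠ -α → 0 < ⟪α, v⟫ * ⟪t α, v⟫

/-- `P ⊆ Rad` is parabolic if `P ∪ (-P) = Rad` and `P` is closed under root addition. -/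
def IsParabolic (Rad P : Set V) : Prop :=
  P ⊆ Rad ∧ (∀ α ∈ Rad, α ∈ P ∨ -α ∈ P) ∧
    ∀ α ∈ P, ∀ β ∈ P, α + β ∈ Rad → α + β ∈ P

/-- Composition `s_{β 0} ∘ s_{β 1} ∘ ⋯ ∘ s_{β (r-1)}` of the reflections in the roots
`β 0, …, β (r-1)`. -/
noncomputable def reflComp : (r : ℕ) → (Fin r → V) → V → V
  | 0, _ => id
  | r + 1, β => reflRoot (β 0) ∘ reflComp r (fun i => β i.succ)

section Aux

variable {V : Type*} [NormedAddCommGroup V] [InnerProductSpace ℝ V]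

lemma inner_self_ne' {α : V} (h : α ≠ 0) : ⟪α, α⟫ ≠ 0 :=
  fun hc => h ((inner_self_eq_zero (𝕜 := ℝ)).mp hc)

lemma reflRoot_add (α x y : V) : reflRoot α (x + y) = reflRoot α x + reflRoot α y := by
  simp only [reflRoot, inner_add_left]
  have : 2 * (⟪x, α⟫ + ⟪y, α⟫) / ⟪α, α⟫ = 2 * ⟪x, α⟫ / ⟪α, α⟫ + 2 * ⟪y, α⟫ / ⟪α, α⟫ := by ring
  rw [this, add_smul]; abel

lemma reflRoot_smul (α : V) (c : ℝ) (x : V) : reflRoot α (c • x) = c • reflRoot α x := by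
  simp only [reflRoot, real_inner_smul_left, smul_sub, smul_smul]
  have : 2 * (c * ⟪x, α⟫) / ⟪α, α⟫ = c * (2 * ⟪x, α⟫ / ⟪α, α⟫) := by ring
  rw [this]

lemma reflRoot_neg_arg (α x : V) : reflRoot α (-x) = - reflRoot α x := by
  have := reflRoot_smul α (-1) x
  simpa using this

lemma reflRoot_eq_self {α x : V} (h : ⟪x, α⟫ = 0) : reflRoot α x = x := by
  simp [reflRoot, h]

lemma reflRoot_self {α : V} (h : α ≠ 0) : reflRoot α α = -α := by
  have hc := inner_self_ne' h
  rw [reflRoot, mul_div_assoc, div_self hc, mul_one, two_smul]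
  abel

lemma reflRoot_neg_root (α x : V) : reflRoot (-α) x = reflRoot α x := by
  simp only [reflRoot, inner_neg_right, inner_neg_left, smul_neg, neg_neg, mul_neg, neg_div,
    neg_smul]

lemma reflRoot_inner {α : V} (h : α ≠ 0) (x y : V) :
    ⟪reflRoot α x, reflRoot α y⟫ = ⟪x, y⟫ := by
  have hc := inner_self_ne' h
  simp only [reflRoot, inner_sub_left, inner_sub_right, real_inner_smul_left,
    real_inner_smul_right]
  rw [real_inner_comm α y, real_inner_comm α x]
  field_simp
  ring

lemma reflRoot_invol (α x : V) : reflRoot α (reflRoot α x) = x := by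
  by_cases h : α = 0
  · simp [reflRoot, h]
  · have hc := inner_self_ne' h
    simp only [reflRoot, inner_sub_left, real_inner_smul_left, sub_sub, ← add_smul]
    have : (2 * ⟪x, α⟫ / ⟪α, α⟫ + 2 * (⟪x, α⟫ - 2 * ⟪x, α⟫ / ⟪α, α⟫ * ⟪α, α⟫) / ⟪α, α⟫) = 0 := by
      field_simp
      ring
    rw [this, zero_smul, sub_zero]

lemma reflRoot_comm {β γ : V} (h : ⟪β, γ⟫ = 0) (x : V) :
    reflRoot β (reflRoot γ x) = reflRoot γ (reflRoot β x) := by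
  have h' : ⟪γ, β⟫ = 0 := by rw [real_inner_comm]; exact h
  simp only [reflRoot, inner_sub_left, real_inner_smul_left, h, h', mul_zero, zero_div,
    zero_mul, sub_zero, mul_zero]
  abel

end Aux
section Aux2

variable {V : Type*} [NormedAddCommGroup V] [InnerProductSpace ℝ V]

/-- Composition of reflections along a list. -/
noncomputable def reflList (L : List V) (x : V) : V := L.foldr reflRoot x

@[simp] lemma reflList_nil (x : V) : reflList ([] : List V) x = x := rfl

@[simp] lemma reflList_cons (a : V) (M : List V) (x : V) :
    reflList (a :: M) x = reflRoot a (reflList M x) := rfl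

lemma reflComp_eq_reflList (L : List V) (x : V) :
    reflComp L.length (fun i => L.get i) x = reflList L x := by
  induction L generalizing x with
  | nil => rfl
  | cons a M ih =>
      show reflRoot a (reflComp M.length (fun i => (a :: M).get i.succ) x) = _
      have he : (fun i : Fin M.length => (a :: M).get i.succ) = fun i => M.get i := rfl
      rw [he, ih, reflList_cons]

lemma reflList_add (L : List V) (x y : V) :
    reflList L (x + y) = reflList L x + reflList L y := by
  induction L with
  | nil => rfl
  | cons a M ih => simp [ih, reflRoot_add]

lemma reflList_smul (L : List V) (c : ℝ) (x : V) :
    reflList L (c • x) = c • reflList L x := by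
  induction L with
  | nil => rfl
  | cons a M ih => simp [ih, reflRoot_smul]

lemma reflList_neg (L : List V) (x : V) : reflList L (-x) = - reflList L x := by
  simpa using reflList_smul L (-1) x

lemma reflList_inner (L : List V) (h0 : ∀ γ ∈ L, γ ≠ (0 : V)) (x y : V) :
    ⟪reflList L x, reflList L y⟫ = ⟪x, y⟫ := by
  induction L with
  | nil => rfl
  | cons a M ih =>
      simp only [reflList_cons]
      rw [reflRoot_inner (h0 a (List.mem_cons_self))]
      exact ih (fun γ hγ => h0 γ (List.mem_cons_of_mem a hγ))

lemma reflList_fix {L : List V} {x : V} (h : ∀ γ ∈ L, ⟪x, γ⟫ = 0) :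
    reflList L x = x := by
  induction L with
  | nil => rfl
  | cons a M ih =>
      rw [reflList_cons, ih (fun γ hγ => h γ (List.mem_cons_of_mem a hγ)),
        reflRoot_eq_self (h a (List.mem_cons_self))]

lemma reflList_comm {L : List V} {a : V} (h : ∀ γ ∈ L, ⟪a, γ⟫ = 0) (x : V) :
    reflList L (reflRoot a x) = reflRoot a (reflList L x) := by
  induction L with
  | nil => rfl
  | cons b M ih =>
      have hb : ⟪b, a⟫ = 0 := by
        rw [real_inner_comm]; exact h b (List.mem_cons_self)
      rw [reflList_cons, ih (fun γ hγ => h γ (List.mem_cons_of_mem b hγ)), reflList_cons,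
        reflRoot_comm hb]

lemma reflList_invol {L : List V}
    (horth : L.Pairwise (fun a b => ⟪a, b⟫ = 0)) (x : V) :
    reflList L (reflList L x) = x := by
  induction L with
  | nil => rfl
  | cons a M ih =>
      have ha : ∀ γ ∈ M, ⟪a, γ⟫ = 0 := fun γ hγ => (List.pairwise_cons.mp horth).1 γ hγ
      have hM := (List.pairwise_cons.mp horth).2
      rw [reflList_cons, reflList_cons, ← reflList_comm ha, reflRoot_invol, ih hM]

lemma reflList_mem {Rad : Set V} (hRS : IsRootSystem Rad) {L : List V}
    (hmem : ∀ γ ∈ L, γ ∈ Rad) {x : V} (hx : x ∈ Rad) : reflList L x ∈ Rad := by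
  induction L with
  | nil => exact hx
  | cons a M ih =>
      rw [reflList_cons]
      exact hRS.reflMem a (hmem a (List.mem_cons_self))
        _ (ih (fun γ hγ => hmem γ (List.mem_cons_of_mem a hγ)))

lemma reflList_comm_isometry {L : List V} (u : V ≃ₗᵢ[ℝ] V)
    (h : ∀ γ ∈ L, u γ = -γ) (x : V) :
    u (reflList L x) = reflList L (u x) := by
  induction L with
  | nil => rfl
  | cons a M ih =>
      have key : ∀ y : V, u (reflRoot a y) = reflRoot a (u y) := by
        intro y
        have : u (reflRoot a y) = reflRoot (u a) (u y) := by
          simp only [reflRoot, map_sub, map_smul, LinearIsometryEquiv.inner_map_map]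
        rw [this, h a (List.mem_cons_self), reflRoot_neg_root]
      rw [reflList_cons, key, ih (fun γ hγ => h γ (List.mem_cons_of_mem a hγ)), reflList_cons]

lemma reflList_neg_of_mem {L : List V}
    (h0 : ∀ γ ∈ L, γ ≠ (0 : V)) (horth : L.Pairwise (fun a b => ⟪a, b⟫ = 0))
    {γ : V} (hγ : γ ∈ L) : reflList L γ = -γ := by
  induction L with
  | nil => exact absurd hγ List.not_mem_nil
  | cons a M ih =>
      have ha : ∀ δ ∈ M, ⟪a, δ⟫ = 0 := fun δ hδ => (List.pairwise_cons.mp horth).1 δ hδ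
      have hM := (List.pairwise_cons.mp horth).2
      rcases List.mem_cons.mp hγ with h | h
      · subst h
        rw [reflList_cons, reflList_fix ha, reflRoot_self (h0 γ (List.mem_cons_self))]
      · have : ⟪γ, a⟫ = 0 := by rw [real_inner_comm]; exact ha γ h
        rw [reflList_cons, ih (fun δ hδ => h0 δ (List.mem_cons_of_mem a hδ)) hM h,
          reflRoot_neg_arg, reflRoot_eq_self this]

/-- Package an involutive inner-preserving linear map as a linear isometry equivalence. -/
noncomputable def mkIso (f : V → V) (hadd : ∀ x y, f (x + y) = f x + f y)
    (hsmul : ∀ (c : ℝ) (x : V), f (c • x) = c • f x) (hinv : ∀ x, f (f x) = x)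
    (hinner : ∀ x y, ⟪f x, f y⟫ = ⟪x, y⟫) : V ≃ₗᵢ[ℝ] V :=
  LinearEquiv.isometryOfInner
    { toFun := f, map_add' := hadd, map_smul' := hsmul, invFun := f,
      left_inv := hinv, right_inv := hinv } hinner

@[simp] lemma mkIso_apply (f : V → V) (hadd hsmul hinv hinner) (x : V) :
    mkIso f hadd hsmul hinv hinner x = f x := rfl

lemma invol_inner_comm (u : V ≃ₗᵢ[ℝ] V) (hu : ∀ x, u (u x) = x) (x y : V) :
    ⟪u x, y⟫ = ⟪x, u y⟫ := by
  conv_lhs => rw [← hu y]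
  exact u.inner_map_map x (u y)

lemma exists_generic_finset (K : Submodule ℝ V) (F : Finset V)
    (h : ∀ α ∈ F, ∃ x ∈ K, ⟪α, x⟫ ≠ 0) : ∃ v ∈ K, ∀ α ∈ F, ⟪α, v⟫ ≠ 0 := by
  classical
  induction F using Finset.induction_on with
  | empty => exact ⟨0, K.zero_mem, by simp⟩
  | @insert a F ha ih =>
      obtain ⟨x, hxK, hax⟩ := h a (Finset.mem_insert_self a F)
      obtain ⟨v, hvK, hv⟩ := ih (fun α hα => h α (Finset.mem_insert_of_mem hα))
      obtain ⟨c, hc⟩ := Infinite.exists_notMem_finset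
        ((insert a F).image (fun β => -⟪β, v⟫ / ⟪β, x⟫))
      refine ⟨v + c • x, K.add_mem hvK (K.smul_mem c hxK), ?_⟩
      intro β hβ hzero
      rw [inner_add_right, real_inner_smul_right] at hzero
      by_cases hβx : ⟪β, x⟫ = 0
      · rw [hβx, mul_zero, add_zero] at hzero
        rcases Finset.mem_insert.mp hβ with h' | h'
        · subst h'; exact hax hβx
        · exact hv β h' hzero
      · apply hc
        refine Finset.mem_image.mpr ⟨β, hβ, ?_⟩
        field_simp
        linarith
  end Aux2
section Aux3

variable {V : Type*} [NormedAddCommGroup V] [InnerProductSpace ℝ V]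

/-- The candidate roots: negated by `t` and orthogonal to everything chosen so far. -/
def Ngt (Rad : Set V) (t : V ≃ₗᵢ[ℝ] V) (L : List V) : Set V :=
  {α | α ∈ Rad ∧ t α = -α ∧ ∀ γ ∈ L, ⟪α, γ⟫ = 0}

/-- Invariant for the greedy construction of strongly orthogonal roots, newest first. -/
def GoodList (Rad : Set V) (t : V ≃ₗᵢ[ℝ] V) (v₀ : V) : List V → Prop
  | [] => True
  | a :: M => a ∈ Rad ∧ t a = -a ∧ 0 < ⟪a, v₀⟫ ∧ (∀ γ ∈ M, ⟪a, γ⟫ = 0) ∧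
      (∀ α ∈ Rad, t α = -α → (∀ γ ∈ M, ⟪α, γ⟫ = 0) → ⟪α, v₀⟫ ≤ ⟪a, v₀⟫) ∧
      GoodList Rad t v₀ M

variable {Rad : Set V} {t : V ≃ₗᵢ[ℝ] V} {v₀ : V}

lemma goodList_mem (hRS : IsRootSystem Rad) {L : List V} (h : GoodList Rad t v₀ L) :
    ∀ a ∈ L, a ∈ Rad ∧ t a = -a ∧ 0 < ⟪a, v₀⟫ := by
  induction L with
  | nil => intro a ha; exact absurd ha List.not_mem_nil
  | cons b M ih =>
      obtain ⟨hb, htb, hbp, -, -, hM⟩ := h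
      intro a ha
      rcases List.mem_cons.mp ha with h' | h'
      · subst h'; exact ⟨hb, htb, hbp⟩
      · exact ih hM a h'

lemma goodList_orth {L : List V} (h : GoodList Rad t v₀ L) :
    L.Pairwise (fun a b => ⟪a, b⟫ = 0) := by
  induction L with
  | nil => exact List.Pairwise.nil
  | cons b M ih =>
      obtain ⟨-, -, -, horth, -, hM⟩ := h
      exact List.pairwise_cons.mpr ⟨horth, ih hM⟩

lemma goodList_not_root (hRS : IsRootSystem Rad) {L : List V} (h : GoodList Rad t v₀ L)
    {a : V} (ha : a ∈ Rad) (hta : t a = -a) (hpos : 0 < ⟪a, v₀⟫)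
    (horth : ∀ γ ∈ L, ⟪a, γ⟫ = 0) :
    ∀ γ ∈ L, a + γ ∉ Rad ∧ a - γ ∉ Rad := by
  induction L with
  | nil => intro γ hγ; exact absurd hγ List.not_mem_nil
  | cons b M ih =>
      obtain ⟨hb, htb, hbp, hborth, hbmax, hM⟩ := h
      have hab : ⟪a, b⟫ = 0 := horth b (List.mem_cons_self)
      have horthM : ∀ γ ∈ M, ⟪a, γ⟫ = 0 := fun γ hγ => horth γ (List.mem_cons_of_mem b hγ)
      have hsum : a + b ∉ Rad := by
        intro hmem
        have h1 : t (a + b) = -(a + b) := by rw [map_add, hta, htb, neg_add]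
        have h2 : ∀ γ ∈ M, ⟪a + b, γ⟫ = 0 := by
          intro γ hγ
          rw [inner_add_left, horthM γ hγ, hborth γ hγ, add_zero]
        have := hbmax (a + b) hmem h1 h2
        rw [inner_add_left] at this
        linarith
      intro γ hγ
      rcases List.mem_cons.mp hγ with h' | h'
      · subst h'
        refine ⟨hsum, ?_⟩
        intro hmem
        have hb0 : (γ : V) ≠ 0 := hRS.nonzero γ hb
        have hcb := inner_self_ne' hb0
        have hrefl : reflRoot γ (a - γ) = a + γ := by
          rw [reflRoot, inner_sub_left, hab]
          have h2 : (2 * (0 - ⟪γ, γ⟫) / ⟪γ, γ⟫) = -2 := by field_simp; ring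
          rw [h2]
          module
        have hmem2 := hRS.reflMem γ hb (a - γ) hmem
        rw [hrefl] at hmem2
        exact hsum hmem2
      · exact ih hM horthM γ h'

lemma goodList_strong (hRS : IsRootSystem Rad) {L : List V} (h : GoodList Rad t v₀ L) :
    L.Pairwise (fun a b => ⟪a, b⟫ = 0 ∧ a + b ∉ Rad ∧ a - b ∉ Rad) := by
  induction L with
  | nil => exact List.Pairwise.nil
  | cons b M ih =>
      obtain ⟨hb, htb, hbp, hborth, hbmax, hM⟩ := h
      refine List.pairwise_cons.mpr ⟨?_, ih hM⟩
      intro γ hγ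
      obtain ⟨h1, h2⟩ := goodList_not_root hRS hM hb htb hbp hborth γ hγ
      exact ⟨hborth γ hγ, h1, h2⟩

lemma ngt_finite (hRS : IsRootSystem Rad) (L : List V) : (Ngt Rad t L).Finite :=
  hRS.finite.subset (fun α hα => hα.1)

lemma exists_goodList (hRS : IsRootSystem Rad) (hreg : ∀ α ∈ Rad, ⟪α, v₀⟫ ≠ 0) :
    ∃ L : List V, GoodList Rad t v₀ L ∧ Ngt Rad t L = ∅ := by
  classical
  suffices h : ∀ (n : ℕ) (L : List V), GoodList Rad t v₀ L → (Ngt Rad t L).ncard ≤ n →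
      ∃ L', GoodList Rad t v₀ L' ∧ Ngt Rad t L' = ∅ by
    exact h (Ngt Rad t []).ncard [] trivial le_rfl
  intro n
  induction n with
  | zero =>
      intro L hGL hcard
      exact ⟨L, hGL, (Set.ncard_eq_zero (ngt_finite hRS L)).mp (Nat.le_zero.mp hcard)⟩
  | succ n ih =>
      intro L hGL hcard
      by_cases hN : Ngt Rad t L = ∅
      · exact ⟨L, hGL, hN⟩
      · have hfin := ngt_finite (t := t) hRS L
        have hne : hfin.toFinset.Nonempty := by
          rw [Set.Finite.toFinset_nonempty]
          exact Set.nonempty_iff_ne_empty.mpr hN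
        obtain ⟨a, haF, hamax⟩ := Finset.exists_max_image hfin.toFinset (fun α => ⟪α, v₀⟫) hne
        rw [Set.Finite.mem_toFinset] at haF
        obtain ⟨haR, hta, haorth⟩ := haF
        have hamax' : ∀ α ∈ Rad, t α = -α → (∀ γ ∈ L, ⟪α, γ⟫ = 0) → ⟪α, v₀⟫ ≤ ⟪a, v₀⟫ := by
          intro α h1 h2 h3
          exact hamax α (by rw [Set.Finite.mem_toFinset]; exact ⟨h1, h2, h3⟩)
        have hneg : -a ∈ Rad := by
          have := hRS.reflMem a haR a haR
          rwa [reflRoot_self (hRS.nonzero a haR)] at this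
        have hpos : 0 < ⟪a, v₀⟫ := by
          have h1 : ⟪-a, v₀⟫ ≤ ⟪a, v₀⟫ := by
            apply hamax' (-a) hneg
            · rw [map_neg, hta, neg_neg]
            · intro γ hγ; rw [inner_neg_left, haorth γ hγ, neg_zero]
          rw [inner_neg_left] at h1
          rcases (hreg a haR).lt_or_gt with h | h
          · linarith
          · exact h
        have hgood : GoodList Rad t v₀ (a :: L) := ⟨haR, hta, hpos, haorth, hamax', hGL⟩
        have hss : Ngt Rad t (a :: L) ⊂ Ngt Rad t L := by
          constructor
          · intro α ⟨h1, h2, h3⟩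
            exact ⟨h1, h2, fun γ hγ => h3 γ (List.mem_cons_of_mem a hγ)⟩
          · intro hsub
            have : a ∈ Ngt Rad t (a :: L) := hsub ⟨haR, hta, haorth⟩
            have := this.2.2 a (List.mem_cons_self)
            exact inner_self_ne' (hRS.nonzero a haR) this
        have hlt : (Ngt Rad t (a :: L)).ncard < (Ngt Rad t L).ncard :=
          Set.ncard_lt_ncard hss (ngt_finite hRS L)
        exact ih (a :: L) hgood (by omega)

end Aux3
section Aux4

variable {V : Type*} [NormedAddCommGroup V] [InnerProductSpace ℝ V]

/-- The fixed-point subspace of a linear isometry. -/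
def fixedPts (u : V ≃ₗᵢ[ℝ] V) : Submodule ℝ V where
  carrier := {x | u x = x}
  add_mem' := by
    intro a b ha hb
    simp only [Set.mem_setOf_eq] at *
    rw [map_add, ha, hb]
  zero_mem' := by simp
  smul_mem' := by
    intro c x hx
    simp only [Set.mem_setOf_eq] at *
    rw [map_smul, hx]

lemma mem_fixedPts {u : V ≃ₗᵢ[ℝ] V} {x : V} : x ∈ fixedPts u ↔ u x = x := Iff.rfl

lemma inner_add_map_pos (u : V ≃ₗᵢ[ℝ] V) {x : V} (h : u x ≠ -x) : 0 < ⟪x, x + u x⟫ := by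
  have hne : x + u x ≠ 0 := by
    intro hc
    exact h (neg_eq_of_add_eq_zero_right hc).symm
  have hpos : (0:ℝ) < ⟪x + u x, x + u x⟫ := by
    rw [real_inner_self_eq_norm_mul_norm]
    exact mul_pos (norm_pos_iff.mpr hne) (norm_pos_iff.mpr hne)
  have h1 : ⟪u x, u x⟫ = ⟪x, x⟫ := u.inner_map_map x x
  have h2 : ⟪u x, x⟫ = ⟪x, u x⟫ := real_inner_comm _ _
  simp only [inner_add_left, inner_add_right] at hpos ⊢
  linarith

end Aux4
theorem stmt12 {V : Type*} [NormedAddCommGroup V] [InnerProductSpace ℝ V]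
    [FiniteDimensional ℝ V] (Rad : Set V) (hRS : IsRootSystem Rad)
    (t : V ≃ₗᵢ[ℝ] V) (ht : IsInvolution Rad t) :
    ∃ (ε : V ≃ₗᵢ[ℝ] V) (r : ℕ) (β : Fin r → V) (v : V),
      IsInvolution Rad ε ∧ (∀ α ∈ Rad, ε α ≠ -α) ∧
      (∀ i, β i ∈ Rad) ∧ (∀ i j, i ≠ j → StronglyOrthogonal Rad (β i) (β j)) ∧
      (∀ i, ε (β i) = β i) ∧ (∀ i, t (β i) = -(β i)) ∧
      (∀ x : V, t x = ε (reflComp r β x)) ∧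
      IsSChamber Rad t v ∧ IsSChamber Rad ε v := by
  classical
  -- a regular vector
  obtain ⟨v₀, -, hv₀⟩ := exists_generic_finset (⊤ : Submodule ℝ V) hRS.finite.toFinset
    (fun α hα => ⟨α, Submodule.mem_top,
      inner_self_ne' (hRS.nonzero α (hRS.finite.mem_toFinset.mp hα))⟩)
  have hv₀' : ∀ α ∈ Rad, ⟪α, v₀⟫ ≠ 0 := fun α hα => hv₀ α (hRS.finite.mem_toFinset.mpr hα)
  -- the greedy list of strongly orthogonal roots
  obtain ⟨L, hGL, hNL⟩ := exists_goodList (t := t) hRS hv₀'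
  have hLmem : ∀ γ ∈ L, γ ∈ Rad := fun γ hγ => (goodList_mem hRS hGL γ hγ).1
  have hLneg : ∀ γ ∈ L, t γ = -γ := fun γ hγ => (goodList_mem hRS hGL γ hγ).2.1
  have hL0 : ∀ γ ∈ L, γ ≠ (0 : V) := fun γ hγ => hRS.nonzero γ (hLmem γ hγ)
  have hLorth := goodList_orth hGL
  have hLstrong := goodList_strong hRS hGL
  set σ : V → V := reflList L with hσdef
  have hσσ : ∀ x, σ (σ x) = x := fun x => reflList_invol hLorth x
  have htσ : ∀ x, t (σ x) = σ (t x) := fun x => reflList_comm_isometry t hLneg x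
  have hσneg : ∀ x, σ (-x) = -σ x := fun x => reflList_neg L x
  -- the special involution ε
  have hfadd : ∀ x y, t (σ (x + y)) = t (σ x) + t (σ y) := by
    intro x y; rw [hσdef, reflList_add, map_add]
  have hfsmul : ∀ (c : ℝ) (x : V), t (σ (c • x)) = c • t (σ x) := by
    intro c x; rw [hσdef, reflList_smul, map_smul]
  have hfinv : ∀ x, t (σ (t (σ x))) = x := by
    intro x
    rw [← htσ (σ x), ht.invol, hσσ]
  have hfinner : ∀ x y, ⟪t (σ x), t (σ y)⟫ = ⟪x, y⟫ := by
    intro x y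
    rw [t.inner_map_map]
    exact reflList_inner L hL0 x y
  set ε : V ≃ₗᵢ[ℝ] V := mkIso (fun x => t (σ x)) hfadd hfsmul hfinv hfinner with hεdef
  have hεx : ∀ x, ε x = t (σ x) := fun x => rfl
  have hεinvol : ∀ x, ε (ε x) = x := fun x => hfinv x
  have htmem : ∀ x ∈ Rad, t x ∈ Rad := by
    intro x hx
    rw [← ht.maps]; exact ⟨x, hx, rfl⟩
  have hσmem : ∀ x ∈ Rad, σ x ∈ Rad := fun x hx => reflList_mem hRS hLmem hx
  have hεmem : ∀ x ∈ Rad, ε x ∈ Rad := by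
    intro x hx
    rw [hεx]; exact htmem _ (hσmem x hx)
  have hεinv : IsInvolution Rad ε := by
    refine ⟨Set.Subset.antisymm ?_ ?_, hεinvol⟩
    · rintro _ ⟨x, hx, rfl⟩; exact hεmem x hx
    · intro x hx; exact ⟨ε x, hεmem x hx, hεinvol x⟩
  have htAdj : ∀ x y, ⟪t x, y⟫ = ⟪x, t y⟫ := invol_inner_comm t ht.invol
  have hεAdj : ∀ x y, ⟪ε x, y⟫ = ⟪x, ε y⟫ := invol_inner_comm ε hεinvol
  have hσnegL : ∀ γ ∈ L, σ γ = -γ := fun γ hγ => reflList_neg_of_mem hL0 hLorth hγ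
  -- ε is special
  have hspecial : ∀ α ∈ Rad, ε α ≠ -α := by
    intro α hα hcon
    rw [hεx] at hcon
    have h1 : σ α = -(t α) := by
      have h := congrArg t hcon
      rw [ht.invol, map_neg] at h
      exact h
    have h2 : ∀ γ ∈ L, ⟪α, γ⟫ = 0 := by
      intro γ hγ
      have e1 : ⟪α, γ⟫ = ⟪σ α, σ γ⟫ := (reflList_inner L hL0 α γ).symm
      rw [hσnegL γ hγ, h1, inner_neg_neg, htAdj, hLneg γ hγ, inner_neg_right] at e1
      linarith
    have h3 : σ α = α := reflList_fix h2
    rw [h3] at h1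
    have h4 : t α = -α := by
      have h5 := congrArg Neg.neg h1
      rw [neg_neg] at h5
      exact h5.symm
    have : α ∈ Ngt Rad t L := ⟨hα, h4, h2⟩
    rw [hNL] at this
    exact this
  -- the roots βᵢ
  have hβmem : ∀ i : Fin L.length, L.get i ∈ L := fun i => L.get_mem i
  have hβRad : ∀ i : Fin L.length, L.get i ∈ Rad := fun i => hLmem _ (hβmem i)
  have hβt : ∀ i : Fin L.length, t (L.get i) = -(L.get i) := fun i => hLneg _ (hβmem i)
  have hβε : ∀ i : Fin L.length, ε (L.get i) = L.get i := by
    intro i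
    rw [hεx, hσnegL _ (hβmem i), map_neg, hβt i, neg_neg]
  have hnegmem : ∀ x ∈ Rad, -x ∈ Rad := by
    intro x hx
    have := hRS.reflMem x hx x hx
    rwa [reflRoot_self (hRS.nonzero x hx)] at this
  have hSO : ∀ i j : Fin L.length, i ≠ j →
      StronglyOrthogonal Rad (L.get i) (L.get j) := by
    have key := List.pairwise_iff_get.mp hLstrong
    have main : ∀ i j : Fin L.length, (⟪L.get i, L.get j⟫ = 0) →
        (L.get i + L.get j ∉ Rad) → (L.get i - L.get j ∉ Rad) →
        StronglyOrthogonal Rad (L.get i) (L.get j) := by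
      intro i j ho hs hd
      refine ⟨?_, ?_, hs, hd⟩
      · intro he
        rw [he] at ho
        exact inner_self_ne' (hRS.nonzero _ (hβRad j)) ho
      · intro he
        rw [he, inner_neg_left, neg_eq_zero] at ho
        exact inner_self_ne' (hRS.nonzero _ (hβRad j)) ho
    intro i j hij
    rcases lt_or_gt_of_ne hij with h | h
    · obtain ⟨ho, hs, hd⟩ := key i j h
      exact main i j ho hs hd
    · obtain ⟨ho, hs, hd⟩ := key j i h
      refine main i j (by rw [real_inner_comm]; exact ho) ?_ ?_
      · rw [add_comm]; exact hs
      · intro hmem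
        exact hd (by rw [← neg_sub]; exact hnegmem _ hmem)
  -- the decomposition
  have hdecomp : ∀ x : V, t x = ε (reflComp L.length (fun i => L.get i) x) := by
    intro x
    rw [reflComp_eq_reflList, hεx, hσσ]
  -- construction of the chamber vector
  obtain ⟨vp, hvpK, hvp⟩ := exists_generic_finset (fixedPts t)
    (hRS.finite.toFinset.filter (fun α => t α ≠ -α))
    (by
      intro α hα
      rw [Finset.mem_filter] at hα
      refine ⟨α + t α, ?_, ?_⟩
      · rw [mem_fixedPts, map_add, ht.invol, add_comm]
      · exact (inner_add_map_pos t hα.2).ne')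
  have hvpfix : t vp = vp := hvpK
  have hvp' : ∀ α ∈ Rad, t α ≠ -α → ⟪α, vp⟫ ≠ 0 := by
    intro α hα hne
    exact hvp α (Finset.mem_filter.mpr ⟨hRS.finite.mem_toFinset.mpr hα, hne⟩)
  obtain ⟨w, hwK, hw⟩ := exists_generic_finset (fixedPts ε)
    (hRS.finite.toFinset.filter (fun α => t α = -α))
    (by
      intro α hα
      rw [Finset.mem_filter] at hα
      have hαR := hRS.finite.mem_toFinset.mp hα.1
      refine ⟨α + ε α, ?_, ?_⟩
      · rw [mem_fixedPts, map_add, hεinvol, add_comm]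
      · exact (inner_add_map_pos ε (hspecial α hαR)).ne')
  have hwfix : ε w = w := hwK
  have hw' : ∀ α ∈ Rad, t α = -α → ⟪α, w⟫ ≠ 0 := by
    intro α hα hne
    exact hw α (Finset.mem_filter.mpr ⟨hRS.finite.mem_toFinset.mpr hα, hne⟩)
  -- vectors negated by t are orthogonal to vp
  have hperp : ∀ x : V, t x = -x → ⟪x, vp⟫ = 0 := by
    intro x hx
    have h := (t.inner_map_map x vp).symm
    rw [hx, hvpfix, inner_neg_left] at h
    linarith
  -- choice of δ
  set Q : Finset V := hRS.finite.toFinset.filter (fun γ => ⟪γ, vp⟫ ≠ 0) with hQdef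
  set g : V → ℝ := fun γ => |⟪γ, vp⟫| / (|⟪γ, w⟫| + 1) with hgdef
  have hgpos : ∀ γ ∈ Q, 0 < g γ := by
    intro γ hγ
    rw [hQdef, Finset.mem_filter] at hγ
    have h1 : 0 < |⟪γ, vp⟫| := abs_pos.mpr hγ.2
    have h2 : (0:ℝ) < |⟪γ, w⟫| + 1 := by positivity
    exact div_pos h1 h2
  set δ : ℝ := if hQ : Q.Nonempty then (Q.image g).min' (hQ.image g) else 1 with hδdef
  have hδpos : 0 < δ := by
    rw [hδdef]
    split_ifs with hQ
    · obtain ⟨γ, hγ, he⟩ := Finset.mem_image.mp ((Q.image g).min'_mem (hQ.image g))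
      rw [← he]
      exact hgpos γ hγ
    · norm_num
  have hδle : ∀ γ ∈ Q, δ ≤ g γ := by
    intro γ hγ
    have hQne : Q.Nonempty := ⟨γ, hγ⟩
    rw [hδdef, dif_pos hQne]
    exact Finset.min'_le _ _ (Finset.mem_image_of_mem g hγ)
  have hδsmall : ∀ γ ∈ Rad, ⟪γ, vp⟫ ≠ 0 → δ * |⟪γ, w⟫| < |⟪γ, vp⟫| := by
    intro γ hγ hne
    have hγQ : γ ∈ Q := Finset.mem_filter.mpr ⟨hRS.finite.mem_toFinset.mpr hγ, hne⟩
    have h1 := hδle γ hγQ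
    have hA : 0 < |⟪γ, vp⟫| := abs_pos.mpr hne
    have hB : 0 ≤ |⟪γ, w⟫| := abs_nonneg _
    have h2 : g γ * |⟪γ, w⟫| < |⟪γ, vp⟫| := by
      rw [hgdef]
      rw [div_mul_eq_mul_div, div_lt_iff₀ (by positivity)]
      nlinarith
    calc δ * |⟪γ, w⟫| ≤ g γ * |⟪γ, w⟫| := by nlinarith
      _ < |⟪γ, vp⟫| := h2
  set v : V := vp + δ • w with hvdef
  have hinnerv : ∀ γ : V, ⟪γ, v⟫ = ⟪γ, vp⟫ + δ * ⟪γ, w⟫ := by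
    intro γ
    rw [hvdef, inner_add_right, real_inner_smul_right]
  have hsign : ∀ γ ∈ Rad, ⟪γ, vp⟫ ≠ 0 → 0 < ⟪γ, v⟫ * ⟪γ, vp⟫ := by
    intro γ hγ hne
    have habs : |δ * ⟪γ, w⟫| < |⟪γ, vp⟫| := by
      rw [abs_mul, abs_of_pos hδpos]
      exact hδsmall γ hγ hne
    obtain ⟨hl, hr⟩ := abs_lt.mp habs
    rw [hinnerv]
    rcases hne.lt_or_gt with h | h
    · rw [abs_of_neg h] at hl hr
      nlinarith
    · rw [abs_of_pos h] at hl hr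
      nlinarith
  have hregv : IsRegular Rad v := by
    intro γ hγ
    by_cases h : ⟪γ, vp⟫ = 0
    · have htγ : t γ = -γ := by
        by_contra hcon
        exact hvp' γ hγ hcon h
      rw [hinnerv, h, zero_add]
      exact mul_ne_zero hδpos.ne' (hw' γ hγ htγ)
    · intro hcon
      have := hsign γ hγ h
      rw [hcon, zero_mul] at this
      exact lt_irrefl 0 this
  -- v is an S-chamber vector for t
  have htcham : ∀ α ∈ Rad, t α ≠ α → t α ≠ -α → 0 < ⟪α, v⟫ * ⟪t α, v⟫ := by
    intro α hα hne1 hne2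
    have hαvp : ⟪α, vp⟫ ≠ 0 := hvp' α hα hne2
    have htαvp : ⟪t α, vp⟫ = ⟪α, vp⟫ := by rw [htAdj, hvpfix]
    have h1 := hsign α hα hαvp
    have h2 := hsign (t α) (htmem α hα) (by rw [htαvp]; exact hαvp)
    rw [htαvp] at h2
    have h3 : 0 < ⟪α, vp⟫ * ⟪α, vp⟫ := mul_self_pos.mpr hαvp
    nlinarith
  -- v is an S-chamber vector for ε
  have hεvp : ε vp = vp := by
    rw [hεx]
    have : σ vp = vp := by
      apply reflList_fix
      intro γ hγ
      have h := (t.inner_map_map vp γ).symm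
      rw [hvpfix, hLneg γ hγ, inner_neg_right] at h
      linarith
    rw [this, hvpfix]
  have hεcham : ∀ α ∈ Rad, ε α ≠ α → ε α ≠ -α → 0 < ⟪α, v⟫ * ⟪ε α, v⟫ := by
    intro α hα hne1 hne2
    by_cases hcase : ⟪α, vp⟫ = 0
    · have htα : t α = -α := by
        by_contra hcon
        exact hvp' α hα hcon hcase
      have hεα : t (ε α) = -(ε α) := by
        rw [hεx, ht.invol]
        rw [htσ, htα, hσneg, neg_neg]
      have hεperp : ⟪ε α, vp⟫ = 0 := hperp (ε α) hεα
      have hαw : ⟪α, w⟫ ≠ 0 := hw' α hα htα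
      have hεαw : ⟪ε α, w⟫ = ⟪α, w⟫ := by rw [hεAdj, hwfix]
      rw [hinnerv, hinnerv, hcase, hεperp, zero_add, zero_add, hεαw]
      have : (0:ℝ) < (δ * ⟪α, w⟫) * (δ * ⟪α, w⟫) :=
        mul_self_pos.mpr (mul_ne_zero hδpos.ne' hαw)
      exact this
    · have hεαvp : ⟪ε α, vp⟫ = ⟪α, vp⟫ := by rw [hεAdj, hεvp]
      have h1 := hsign α hα hcase
      have h2 := hsign (ε α) (hεmem α hα) (by rw [hεαvp]; exact hcase)
      rw [hεαvp] at h2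
      have h3 : 0 < ⟪α, vp⟫ * ⟪α, vp⟫ := mul_self_pos.mpr hcase
      nlinarith
  exact ⟨ε, L.length, fun i => L.get i, v, hεinv, hspecial, hβRad, hSO, hβε, hβt, hdecomp,
    ⟨hregv, htcham⟩, ⟨hregv, hεcham⟩⟩

end PaperRS
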